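/- For every C* > 0 there exists a constant C > 0, depending only on C*, with the following property. Let x, y, z ∈ ℝ² with |det(y−x, z−x)|/2 ≥ C*·diam(κ)², where κ = conv{x,y,z} and diam(κ) = max(|y−x|, |z−x|, |z−y|); let m₁ = (x+y)/2, m₂ = (y+z)/2, m₃ = (z+x)/2 be the edge midpoints. Let g : ℝ² → ℝ³ be twice continuously differentiable with ‖D²g(q)‖ ≤ K₂ for all q ∈ κ, let ε ≥ 0, and let w₁, w₂, w₃ ∈ ℝ³ satisfy |wᵢ − g(mᵢ)| ≤ ε for i = 1, 2, 3. Let N : ℝ² → ℝ³ be the unique affine map with N(mᵢ) = wᵢ for i = 1, 2, 3. Then sup_{q ∈ κ} ‖∇N − ∇g(q)‖ ≤ C·(K₂·diam(κ) + ε/diam(κ)). -/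

import Mathlib

open scoped RealInnerProductSpace
set_option maxHeartbeats 1000000

noncomputable section

/-- Euclidean plane and 3-space. -/
abbrev E2 := EuclideanSpace ℝ (Fin 2)
abbrev E3 := EuclideanSpace ℝ (Fin 3)

/-- The diameter of the triangle `conv{x,y,z} ⊂ ℝ²`. -/
def diam2 (x y z : E2) : ℝ := max ‖y - x‖ (max ‖z - x‖ ‖z - y‖)

/-- The determinant `det(a, b)` of two vectors in `ℝ²`. -/
def det2 (a b : E2) : ℝ := a 0 * b 1 - a 1 * b 0

lemma E2_norm_sq (v : E2) : ‖v‖ ^ 2 = v 0 ^ 2 + v 1 ^ 2 := by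
  rw [EuclideanSpace.norm_eq, Real.sq_sqrt (by positivity)]
  simp [Fin.sum_univ_two, sq_abs]

lemma abs_det2_le (v w : E2) : |det2 v w| ≤ ‖v‖ * ‖w‖ := by
  have h1 := E2_norm_sq v; have h2 := E2_norm_sq w
  have hv : (0:ℝ) ≤ ‖v‖ := norm_nonneg v
  have hw : (0:ℝ) ≤ ‖w‖ := norm_nonneg w
  have key : (det2 v w) ^ 2 ≤ (‖v‖ * ‖w‖) ^ 2 := by
    simp only [det2]
    nlinarith [sq_nonneg (v 0 * w 0 + v 1 * w 1)]
  rw [← Real.sqrt_sq (mul_nonneg hv hw), ← Real.sqrt_sq_eq_abs]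
  exact Real.sqrt_le_sqrt key

lemma cramer_decomp (e f v : E2) (hD : det2 e f ≠ 0) :
    v = (det2 v f / det2 e f) • e + (det2 e v / det2 e f) • f := by
  have hD' : f 1 * e 0 - f 0 * e 1 ≠ 0 := by
    intro h; apply hD; simp only [det2]; linarith
  have hc := mul_inv_cancel₀ hD'
  ext i
  fin_cases i <;>
    simp only [det2, PiLp.add_apply, PiLp.smul_apply, smul_eq_mul, div_eq_mul_inv,
      Fin.mk_zero, Fin.mk_one]
  · linear_combination (-(v 0)) * hc
  · linear_combination (-(v 1)) * hc

/-- the linear part of the affine map interpolating, at the edge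
midpoints of a regular triangle, values `ε`-close to those of a `C²` map `g`,
approximates `∇g` uniformly on the triangle to order `K₂·diam + ε/diam`. -/
theorem stmt_14 (Cstar : ℝ) (hCstar : 0 < Cstar) :
    ∃ C > (0 : ℝ),
      ∀ (x y z : E2) (g : E2 → E3) (K₂ ε : ℝ) (w₁ w₂ w₃ : E3)
        (N : E2 →ᵃ[ℝ] E3),
      ¬ Collinear ℝ ({x, y, z} : Set E2) →
      Cstar * diam2 x y z ^ 2 ≤ |det2 (y - x) (z - x)| / 2 →
      ContDiff ℝ 2 g →
      (∀ q ∈ convexHull ℝ ({x, y, z} : Set E2),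
        ‖iteratedFDeriv ℝ 2 g q‖ ≤ K₂) →
      0 ≤ ε →
      ‖w₁ - g (midpoint ℝ x y)‖ ≤ ε →
      ‖w₂ - g (midpoint ℝ y z)‖ ≤ ε →
      ‖w₃ - g (midpoint ℝ z x)‖ ≤ ε →
      N (midpoint ℝ x y) = w₁ →
      N (midpoint ℝ y z) = w₂ →
      N (midpoint ℝ z x) = w₃ →
      ∀ q ∈ convexHull ℝ ({x, y, z} : Set E2),
        ‖LinearMap.toContinuousLinearMap N.linear - fderiv ℝ g q‖ ≤
          C * (K₂ * diam2 x y z + ε / diam2 x y z) := by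
  refine ⟨4 / Cstar, by positivity, ?_⟩
  intro x y z g K₂ ε w₁ w₂ w₃ N hcol hreg hg hbound hε hw₁ hw₂ hw₃ hN₁ hN₂ hN₃ q hq
  set d : ℝ := diam2 x y z with hd_def
  set s : Set E2 := convexHull ℝ ({x, y, z} : Set E2) with hs_def
  have hxs : x ∈ s := subset_convexHull ℝ _ (by simp)
  have hys : y ∈ s := subset_convexHull ℝ _ (by simp)
  have hzs : z ∈ s := subset_convexHull ℝ _ (by simp)
  have hconv : Convex ℝ s := convex_convexHull ℝ _
  -- positivity of d
  have hyx : y ≠ x := by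
    rintro rfl
    exact hcol (by rw [Set.insert_comm, Set.insert_idem]; exact collinear_pair ℝ _ _)
  have h1d : ‖y - x‖ ≤ d := le_max_left _ _
  have h2d : ‖z - x‖ ≤ d := le_trans (le_max_left _ _) (le_max_right _ _)
  have h3d : ‖z - y‖ ≤ d := le_trans (le_max_right _ _) (le_max_right _ _)
  have hd : 0 < d := lt_of_lt_of_le (norm_pos_iff.mpr (sub_ne_zero.mpr hyx)) h1d
  -- K₂ is nonnegative
  have hK₂ : 0 ≤ K₂ := le_trans (norm_nonneg _) (hbound x hxs)
  -- diameter bound on s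
  have hdiam : ∀ p ∈ s, ∀ p' ∈ s, ‖p - p'‖ ≤ d := by
    have hb : Bornology.IsBounded ({x, y, z} : Set E2) :=
      (Set.toFinite _).isBounded
    have hbs : Bornology.IsBounded s := by
      rw [hs_def, isBounded_convexHull]; exact hb
    have hds : Metric.diam s ≤ d := by
      rw [hs_def, convexHull_diam]
      refine Metric.diam_le_of_forall_dist_le hd.le ?_
      rintro p hp p' hp'
      simp only [Set.mem_insert_iff, Set.mem_singleton_iff] at hp hp'
      rcases hp with rfl | rfl | rfl <;> rcases hp' with rfl | rfl | rfl <;>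
        simp only [dist_eq_norm] <;>
        first
          | simpa using hd.le
          | exact h1d | exact h2d | exact h3d
          | (rw [norm_sub_rev]; first | exact h1d | exact h2d | exact h3d)
    intro p hp p' hp'
    calc ‖p - p'‖ = dist p p' := (dist_eq_norm p p').symm
      _ ≤ Metric.diam s := Metric.dist_le_diam_of_mem hbs hp hp'
      _ ≤ d := hds
  -- the derivative of g is Lipschitz with constant K₂ on s
  have hg1 : ContDiff ℝ 1 (fderiv ℝ g) := hg.fderiv_right (by norm_num)
  have hgdiff : Differentiable ℝ g := hg.differentiable (by norm_num)
  have hsecond : ∀ p ∈ s, ‖fderiv ℝ (fderiv ℝ g) p‖ ≤ K₂ := by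
    intro p hp
    refine ContinuousLinearMap.opNorm_le_bound _ hK₂ fun u => ?_
    refine ContinuousLinearMap.opNorm_le_bound _ (mul_nonneg hK₂ (norm_nonneg u)) fun v => ?_
    have h := (iteratedFDeriv ℝ 2 g p).le_opNorm ![u, v]
    rw [iteratedFDeriv_two_apply] at h
    simp only [Matrix.cons_val_zero, Matrix.cons_val_one, Matrix.head_cons,
      Fin.prod_univ_two] at h
    calc ‖fderiv ℝ (fderiv ℝ g) p u v‖ ≤ ‖iteratedFDeriv ℝ 2 g p‖ * (‖u‖ * ‖v‖) := h
      _ ≤ K₂ * (‖u‖ * ‖v‖) := by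
          exact mul_le_mul_of_nonneg_right (hbound p hp) (by positivity)
      _ = K₂ * ‖u‖ * ‖v‖ := by ring
  have hLip : ∀ p ∈ s, ‖fderiv ℝ g p - fderiv ℝ g q‖ ≤ K₂ * d := by
    intro p hp
    have := hconv.norm_image_sub_le_of_norm_hasFDerivWithin_le
      (f := fderiv ℝ g) (f' := fun p => fderiv ℝ (fderiv ℝ g) p) (C := K₂)
      (fun r hr => ((hg1.differentiable (by norm_num)) r).hasFDerivAt.hasFDerivWithinAt)
      (fun r hr => hsecond r hr) hq hp
    calc ‖fderiv ℝ g p - fderiv ℝ g q‖ ≤ K₂ * ‖p - q‖ := this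
      _ ≤ K₂ * d := mul_le_mul_of_nonneg_left (hdiam p hp q hq) hK₂
  -- Taylor estimate
  have hTay : ∀ a ∈ s, ∀ b ∈ s,
      ‖g b - g a - (fderiv ℝ g q) (b - a)‖ ≤ (K₂ * d) * ‖b - a‖ := by
    intro a ha b hb
    exact hconv.norm_image_sub_le_of_norm_hasFDerivWithin_le'
      (fun r hr => (hgdiff r).hasFDerivAt.hasFDerivWithinAt)
      (fun r hr => hLip r hr) ha hb
  -- midpoints
  set m₁ : E2 := midpoint ℝ x y with hm₁
  set m₂ : E2 := midpoint ℝ y z with hm₂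
  set m₃ : E2 := midpoint ℝ z x with hm₃
  have hm₁s : m₁ ∈ s := hconv.segment_subset hxs hys (midpoint_mem_segment x y)
  have hm₂s : m₂ ∈ s := hconv.segment_subset hys hzs (midpoint_mem_segment y z)
  have hm₃s : m₃ ∈ s := hconv.segment_subset hzs hxs (midpoint_mem_segment z x)
  -- edge vectors
  have he₂ : m₂ - m₁ = (2:ℝ)⁻¹ • (z - x) := by
    rw [hm₁, hm₂, midpoint_eq_smul_add, midpoint_eq_smul_add, invOf_eq_inv]
    module
  have he₃ : m₃ - m₁ = (2:ℝ)⁻¹ • (z - y) := by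
    rw [hm₁, hm₃, midpoint_eq_smul_add, midpoint_eq_smul_add, invOf_eq_inv]
    module
  have hne₂ : ‖m₂ - m₁‖ ≤ d / 2 := by
    rw [he₂, norm_smul]
    simp only [norm_inv, Real.norm_ofNat]
    linarith
  have hne₃ : ‖m₃ - m₁‖ ≤ d / 2 := by
    rw [he₃, norm_smul]
    simp only [norm_inv, Real.norm_ofNat]
    linarith
  -- determinant of the edge vectors
  set D : ℝ := det2 (m₂ - m₁) (m₃ - m₁) with hD_def
  have hDval : D = det2 (y - x) (z - x) / 4 := by
    rw [hD_def, he₂, he₃]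
    simp only [det2, PiLp.smul_apply, PiLp.sub_apply, smul_eq_mul]
    ring
  have hDlow : Cstar * d ^ 2 / 2 ≤ |D| := by
    rw [hDval, abs_div]
    rw [abs_of_nonneg (by norm_num : (0:ℝ) ≤ (4:ℝ))]
    linarith
  have hDpos : 0 < |D| := lt_of_lt_of_le (by positivity) hDlow
  have hDne : D ≠ 0 := fun h => by simp [h] at hDpos
  -- the linear map to estimate
  set L : E2 →L[ℝ] E3 :=
    LinearMap.toContinuousLinearMap N.linear - fderiv ℝ g q with hL_def
  -- edge estimates
  have hedge : ∀ (m : E2), m ∈ s → ∀ (w wm : E3), ‖w - g m‖ ≤ ε → ‖wm - g m₁‖ ≤ ε →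
      N m = w → N m₁ = wm →
      ‖L (m - m₁)‖ ≤ K₂ * d * ‖m - m₁‖ + 2 * ε := by
    intro m hm w wm hw hwm hNm hNm₁
    have hlin : N.linear (m - m₁) = w - wm := by
      have := N.linearMap_vsub m m₁
      rw [vsub_eq_sub, vsub_eq_sub, hNm, hNm₁] at this
      exact this
    have hLval : L (m - m₁)
        = (w - g m) - (wm - g m₁) + (g m - g m₁ - (fderiv ℝ g q) (m - m₁)) := by
      rw [hL_def]
      simp only [ContinuousLinearMap.sub_apply, ContinuousLinearMap.coe_coe,
        LinearMap.coe_toContinuousLinearMap', hlin]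
      abel
    rw [hLval]
    calc ‖(w - g m) - (wm - g m₁) + (g m - g m₁ - (fderiv ℝ g q) (m - m₁))‖
        ≤ ‖(w - g m) - (wm - g m₁)‖ + ‖g m - g m₁ - (fderiv ℝ g q) (m - m₁)‖ :=
          norm_add_le _ _
      _ ≤ (‖w - g m‖ + ‖wm - g m₁‖) + (K₂ * d) * ‖m - m₁‖ :=
          add_le_add (norm_sub_le _ _) (hTay m₁ hm₁s m hm)
      _ ≤ K₂ * d * ‖m - m₁‖ + 2 * ε := by linarith
  have hLe₂ : ‖L (m₂ - m₁)‖ ≤ K₂ * d ^ 2 / 2 + 2 * ε := by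
    have := hedge m₂ hm₂s w₂ w₁ hw₂ hw₁ hN₂ hN₁
    have h2 : K₂ * d * ‖m₂ - m₁‖ ≤ K₂ * d ^ 2 / 2 := by
      nlinarith [mul_nonneg (mul_nonneg hK₂ hd.le) (sub_nonneg.mpr hne₂)]
    linarith
  have hLe₃ : ‖L (m₃ - m₁)‖ ≤ K₂ * d ^ 2 / 2 + 2 * ε := by
    have := hedge m₃ hm₃s w₃ w₁ hw₃ hw₁ hN₃ hN₁
    have h2 : K₂ * d * ‖m₃ - m₁‖ ≤ K₂ * d ^ 2 / 2 := by
      nlinarith [mul_nonneg (mul_nonneg hK₂ hd.le) (sub_nonneg.mpr hne₃)]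
    linarith
  -- operator norm bound
  refine ContinuousLinearMap.opNorm_le_bound _ (by positivity) fun v => ?_
  have hdecomp := cramer_decomp (m₂ - m₁) (m₃ - m₁) v hDne
  have hLv : L v = (det2 v (m₃ - m₁) / D) • L (m₂ - m₁)
      + (det2 (m₂ - m₁) v / D) • L (m₃ - m₁) := by
    conv_lhs => rw [hdecomp]
    rw [map_add, map_smul, map_smul]
  have hB : (0:ℝ) ≤ K₂ * d ^ 2 / 2 + 2 * ε := by positivity
  have hd23 : |det2 v (m₃ - m₁)| ≤ ‖v‖ * (d / 2) :=
    le_trans (abs_det2_le _ _) (mul_le_mul_of_nonneg_left hne₃ (norm_nonneg v))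
  have hd2v : |det2 (m₂ - m₁) v| ≤ ‖v‖ * (d / 2) := by
    refine le_trans (abs_det2_le _ _) ?_
    rw [mul_comm]
    exact mul_le_mul_of_nonneg_left hne₂ (norm_nonneg v)
  have hnorm : ‖L v‖ ≤ (|det2 v (m₃ - m₁)| * ‖L (m₂ - m₁)‖
      + |det2 (m₂ - m₁) v| * ‖L (m₃ - m₁)‖) / |D| := by
    rw [hLv]
    calc ‖(det2 v (m₃ - m₁) / D) • L (m₂ - m₁) + (det2 (m₂ - m₁) v / D) • L (m₃ - m₁)‖
        ≤ ‖(det2 v (m₃ - m₁) / D) • L (m₂ - m₁)‖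
          + ‖(det2 (m₂ - m₁) v / D) • L (m₃ - m₁)‖ := norm_add_le _ _
      _ = |det2 v (m₃ - m₁)| / |D| * ‖L (m₂ - m₁)‖
          + |det2 (m₂ - m₁) v| / |D| * ‖L (m₃ - m₁)‖ := by
            rw [norm_smul, norm_smul, Real.norm_eq_abs, Real.norm_eq_abs, abs_div, abs_div]
      _ = (|det2 v (m₃ - m₁)| * ‖L (m₂ - m₁)‖
          + |det2 (m₂ - m₁) v| * ‖L (m₃ - m₁)‖) / |D| := by ring
  refine le_trans hnorm ?_
  rw [div_le_iff₀ hDpos]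
  have hnum : |det2 v (m₃ - m₁)| * ‖L (m₂ - m₁)‖ + |det2 (m₂ - m₁) v| * ‖L (m₃ - m₁)‖
      ≤ ‖v‖ * (d / 2) * (K₂ * d ^ 2 / 2 + 2 * ε) * 2 := by
    have := add_le_add
      (mul_le_mul hd23 hLe₂ (norm_nonneg _) (by positivity))
      (mul_le_mul hd2v hLe₃ (norm_nonneg _) (by positivity))
    linarith
  refine le_trans hnum ?_
  have hrhs : 4 / Cstar * (K₂ * d + ε / d) * ‖v‖ * (Cstar * d ^ 2 / 2)
      = 2 * ‖v‖ * (K₂ * d ^ 3 + ε * d) := by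
    field_simp
    ring
  calc ‖v‖ * (d / 2) * (K₂ * d ^ 2 / 2 + 2 * ε) * 2
      = ‖v‖ * (K₂ * d ^ 3 / 2 + 2 * ε * d) := by ring
    _ ≤ 2 * ‖v‖ * (K₂ * d ^ 3 + ε * d) := by nlinarith [mul_nonneg (norm_nonneg v) (mul_nonneg hK₂ (pow_nonneg hd.le 3))]
    _ = 4 / Cstar * (K₂ * d + ε / d) * ‖v‖ * (Cstar * d ^ 2 / 2) := hrhs.symm
    _ ≤ 4 / Cstar * (K₂ * d + ε / d) * ‖v‖ * |D| := by
        refine mul_le_mul_of_nonneg_left hDlow (by positivity)
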